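/- (Denjoy–Koksma inequality) Let α be irrational with continued fraction denominators (q_n), and let f : 𝕋 → ℝ be a function of bounded variation. Then for every x ∈ 𝕋 and every n, |∑_{k=0}^{q_n − 1} f(x + kα) − q_n ∫_𝕋 f dλ| ≤ Var f. -/

import Mathlib

open Set MeasureTheory

private lemma evar_shift (f : ℝ → ℝ) (a b c : ℝ) :
    eVariationOn (fun t => f (t + c)) (Set.Icc a b) = eVariationOn f (Set.Icc (a + c) (b + c)) := by
  have h := eVariationOn.comp_eq_of_monotoneOn f (fun t => t + c)
      ((monotone_id.add_const c).monotoneOn (Set.Icc a b))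
  rwa [Set.image_add_const_Icc] at h

private lemma evar_int_shift (f : ℝ → ℝ) (hper : Function.Periodic f 1) (n : ℤ) (a b : ℝ) :
    eVariationOn f (Set.Icc (a + n) (b + n)) = eVariationOn f (Set.Icc a b) := by
  rw [← evar_shift f a b n]
  congr 1
  funext t
  simpa using (hper.int_mul n) t

private lemma evar_Icc_add (f : ℝ → ℝ) {a b c : ℝ} (hab : a ≤ b) (hbc : b ≤ c) :
    eVariationOn f (Set.Icc a b) + eVariationOn f (Set.Icc b c)
      = eVariationOn f (Set.Icc a c) := by
  have h := eVariationOn.Icc_add_Icc f (s := Set.Icc a c) hab hbc ⟨hab, hbc⟩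
  have e1 : Set.Icc a c ∩ Set.Icc a b = Set.Icc a b := by
    rw [Set.Icc_inter_Icc, sup_idem, inf_eq_right.mpr hbc]
  have e2 : Set.Icc a c ∩ Set.Icc b c = Set.Icc b c := by
    rw [Set.Icc_inter_Icc, inf_idem, sup_eq_right.mpr hab]
  rwa [e1, e2, Set.inter_self] at h

private lemma evar_window (f : ℝ → ℝ) (hper : Function.Periodic f 1) (y : ℝ) :
    eVariationOn f (Set.Icc y (y + 1)) = eVariationOn f (Set.Icc 0 1) := by
  set n : ℤ := ⌈y⌉ with hn
  have h1 : y ≤ (n : ℝ) := Int.le_ceil y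
  have h2 : (n : ℝ) ≤ y + 1 := by
    have := Int.ceil_lt_add_one y; linarith
  have h3 : (n : ℝ) - 1 ≤ y := by linarith
  have A : eVariationOn f (Set.Icc (n : ℝ) (y + 1)) = eVariationOn f (Set.Icc ((n : ℝ) - 1) y) := by
    have h := evar_int_shift f hper 1 ((n : ℝ) - 1) y
    simpa using h
  have B : eVariationOn f (Set.Icc ((n : ℝ) - 1) (n : ℝ)) = eVariationOn f (Set.Icc 0 1) := by
    have h := evar_int_shift f hper (n - 1) 0 1
    have e1 : (0 : ℝ) + ((n : ℤ) - 1 : ℤ) = (n : ℝ) - 1 := by push_cast; ring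
    have e2 : (1 : ℝ) + ((n : ℤ) - 1 : ℤ) = (n : ℝ) := by push_cast; ring
    rwa [e1, e2] at h
  calc eVariationOn f (Set.Icc y (y + 1))
      = eVariationOn f (Set.Icc y (n : ℝ)) + eVariationOn f (Set.Icc (n : ℝ) (y + 1)) :=
        (evar_Icc_add f h1 h2).symm
    _ = eVariationOn f (Set.Icc ((n : ℝ) - 1) y) + eVariationOn f (Set.Icc y (n : ℝ)) := by
        rw [A]; exact add_comm _ _
    _ = eVariationOn f (Set.Icc ((n : ℝ) - 1) (n : ℝ)) := evar_Icc_add f h3 h1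
    _ = eVariationOn f (Set.Icc 0 1) := B

/-- A 1-periodic function of bounded variation on `[0,1]` is interval integrable on any
interval of length at most 1. -/
private lemma per_ii (f : ℝ → ℝ) (hper : Function.Periodic f 1)
    (hbv : BoundedVariationOn f (Set.Icc 0 1)) :
    ∀ a b : ℝ, a ≤ b → b ≤ a + 1 → IntervalIntegrable f MeasureTheory.volume a b := by
  obtain ⟨g, h, hg, hh, hfgh⟩ :=
    hbv.locallyBoundedVariationOn.exists_monotoneOn_sub_monotoneOn
  have base : ∀ a b : ℝ, 0 ≤ a → b ≤ 1 → a ≤ b → IntervalIntegrable f volume a b := by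
    intro a b ha hb hab
    have hsub : Set.uIcc a b ⊆ Set.Icc 0 1 := by
      rw [Set.uIcc_of_le hab]; exact Set.Icc_subset_Icc ha hb
    have hint : IntervalIntegrable (g - h) volume a b :=
      ((hg.mono hsub).intervalIntegrable).sub ((hh.mono hsub).intervalIntegrable)
    rwa [← hfgh] at hint
  have shift : ∀ (n : ℤ) (a b : ℝ), (n : ℝ) ≤ a → b ≤ (n : ℝ) + 1 → a ≤ b →
      IntervalIntegrable f volume a b := by
    intro n a b ha hb hab
    have h0 : IntervalIntegrable f volume (a - n) (b - n) :=
      base _ _ (by linarith) (by linarith) (by linarith)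
    have h1 := h0.comp_add_right (-(n : ℝ))
    have h2 : (fun x => f (x + -(n : ℝ))) = f := by
      funext t
      have h3 := (hper.int_mul (-n)) t
      push_cast at h3
      simpa [mul_one] using h3
    rw [h2] at h1
    simpa using h1
  intro a b hab hb
  set n : ℤ := ⌈a⌉ with hn
  have h1 : a ≤ (n : ℝ) := Int.le_ceil a
  have h2 : (n : ℝ) < a + 1 := Int.ceil_lt_add_one a
  rcases le_total b (n : ℝ) with hbn | hnb
  · exact shift (n - 1) a b (by push_cast; linarith) (by push_cast; linarith) hab
  · exact (shift (n - 1) a (n : ℝ) (by push_cast; linarith) (by push_cast; linarith) h1).trans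
      (shift n (n : ℝ) b le_rfl (by linarith) hnb)

/-- Denjoy–Koksma inequality: if `f : 𝕋 → ℝ` (a `1`-periodic function) has bounded
variation on `[0,1]` and `p/q` is a continued-fraction convergent of the irrational `α`
(so `gcd(p,q) = 1` and `|α - p/q| < 1/q²`), then for every `x`,
`|∑_{k<q} f(x + kα) - q ∫₀¹ f| ≤ Var f`. -/
theorem stmt6 (α : ℝ) (hα : Irrational α) (f : ℝ → ℝ)
    (hper : Function.Periodic f 1)
    (hbv : BoundedVariationOn f (Set.Icc 0 1))
    (q : ℕ) (hq : 0 < q) (p : ℤ) (hcop : Int.gcd p (q : ℤ) = 1)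
    (happ : |α - (p : ℝ) / (q : ℝ)| < 1 / (q : ℝ) ^ 2) :
    ∀ x : ℝ,
      |∑ k ∈ Finset.range q, f (x + (k : ℝ) * α) - (q : ℝ) * ∫ y in (0:ℝ)..1, f y| ≤
        (eVariationOn f (Set.Icc 0 1)).toReal := by
  intro x
  have hq0 : (0 : ℝ) < q := by exact_mod_cast hq
  have hqz : (q : ℤ) ≠ 0 := by exact_mod_cast hq.ne'
  set β : ℝ := α - (p : ℝ) / q with hβ
  clear_value β
  set y : ℝ := if 0 ≤ β then x else x - 1 / q with hy
  clear_value y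
  set a : ℕ → ℝ := fun i => y + (i : ℝ) / q with ha
  clear_value a
  set j : ℕ → ℕ := fun k => (((k : ℤ) * p) % q).toNat with hj
  clear_value j
  set z : ℕ → ℝ := fun k => x + (j k : ℝ) / q + (k : ℝ) * β with hz
  clear_value z
  -- step lengths
  have hstep : ∀ i : ℕ, a (i + 1) = a i + 1 / q := by
    intro i
    simp only [ha]
    push_cast
    ring
  have hamono : ∀ i : ℕ, a i ≤ a (i + 1) := by
    intro i
    rw [hstep]
    have h : (0 : ℝ) ≤ 1 / q := by positivity
    linarith
  -- j lands in range q
  have hjlt : ∀ k, j k < q := by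
    intro k
    have h1 : ((k : ℤ) * p) % q < q := Int.emod_lt_of_pos _ (by exact_mod_cast hq)
    have h2 : 0 ≤ ((k : ℤ) * p) % q := Int.emod_nonneg _ hqz
    simp only [hj]
    omega
  -- bound on k β
  have hkβ : ∀ k, k < q → |(k : ℝ) * β| ≤ 1 / q := by
    intro k hk
    have hk' : (k : ℝ) ≤ (q : ℝ) - 1 := by
      have : (k : ℝ) + 1 ≤ q := by exact_mod_cast hk
      linarith
    have h1 : |β| ≤ 1 / (q : ℝ) ^ 2 := le_of_lt happ
    have h2 : (0 : ℝ) ≤ (k : ℝ) := Nat.cast_nonneg k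
    rw [abs_mul, abs_of_nonneg h2]
    have h3 : (k : ℝ) * |β| ≤ ((q : ℝ) - 1) * (1 / q ^ 2) :=
      mul_le_mul hk' h1 (abs_nonneg β) (by linarith)
    have h4 : ((q : ℝ) - 1) * (1 / q ^ 2) ≤ 1 / q := by
      rw [mul_one_div, div_le_div_iff₀ (by positivity) hq0]
      nlinarith
    linarith
  -- membership of z k in its interval
  have hmem : ∀ k, k < q → z k ∈ Set.Icc (a (j k)) (a (j k + 1)) := by
    intro k hk
    have hb := hkβ k hk
    rw [abs_le] at hb
    rw [hstep]
    by_cases h0 : 0 ≤ β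
    · have hy' : y = x := by rw [hy, if_pos h0]
      have hkβ0 : 0 ≤ (k : ℝ) * β := mul_nonneg (Nat.cast_nonneg k) h0
      constructor
      · simp only [ha, hz, hy']; linarith
      · simp only [ha, hz, hy']; linarith [hb.2]
    · have hy' : y = x - 1 / q := by rw [hy, if_neg h0]
      push_neg at h0
      have hkβ0 : (k : ℝ) * β ≤ 0 := mul_nonpos_of_nonneg_of_nonpos (Nat.cast_nonneg k) h0.le
      constructor
      · simp only [ha, hz, hy']; linarith [hb.1]
      · simp only [ha, hz, hy']; linarith
  -- f (x + k α) = f (z k)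
  have hfz : ∀ k : ℕ, f (x + (k : ℝ) * α) = f (z k) := by
    intro k
    set m : ℤ := ((k : ℤ) * p) / q with hm
    have hdecomp : ((k : ℤ) * p) % q + (q : ℤ) * (((k : ℤ) * p) / q) = (k : ℤ) * p :=
      Int.emod_add_mul_ediv _ _
    have hjkZ : ((j k : ℕ) : ℤ) = ((k : ℤ) * p) % q := by
      simp only [hj]
      exact Int.toNat_of_nonneg (Int.emod_nonneg _ hqz)
    have hreal : x + (k : ℝ) * α = z k + (m : ℝ) * 1 := by
      have hZ : (k : ℤ) * p = (q : ℤ) * m + ((j k : ℕ) : ℤ) := by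
        rw [hjkZ, hm]
        have h := Int.emod_add_mul_ediv ((k : ℤ) * p) (q : ℤ)
        linarith
      have hR : (k : ℝ) * (p : ℝ) = (q : ℝ) * (m : ℝ) + (j k : ℝ) := by
        exact_mod_cast hZ
      have h3 : (k : ℝ) * ((p : ℝ) / q) = (m : ℝ) + (j k : ℝ) / q := by
        field_simp
        linear_combination hR
      simp only [hz]
      have : (k : ℝ) * α = (k : ℝ) * ((p : ℝ) / q) + (k : ℝ) * β := by
        rw [hβ]; ring
      rw [this, h3]; ring
    rw [hreal]
    exact (hper.int_mul m) (z k)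
  -- injectivity of j on range q
  have hinj : ∀ k1 ∈ Finset.range q, ∀ k2 ∈ Finset.range q, j k1 = j k2 → k1 = k2 := by
    intro k1 hk1 k2 hk2 he
    rw [Finset.mem_range] at hk1 hk2
    have h1 : ((k1 : ℤ) * p) % q = ((k2 : ℤ) * p) % q := by
      have e1 := Int.toNat_of_nonneg (Int.emod_nonneg ((k1 : ℤ) * p) hqz)
      have e2 := Int.toNat_of_nonneg (Int.emod_nonneg ((k2 : ℤ) * p) hqz)
      simp only [hj] at he
      omega
    have hdvd : (q : ℤ) ∣ ((k1 : ℤ) - k2) * p := by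
      have hme : (k1 : ℤ) * p ≡ (k2 : ℤ) * p [ZMOD q] := h1
      have := Int.ModEq.dvd hme
      have e : (k1 : ℤ) * p - (k2 : ℤ) * p = ((k1 : ℤ) - k2) * p := by ring
      rw [← e]
      exact (Int.ModEq.dvd hme.symm)
    have hcop' : IsCoprime (q : ℤ) p := by
      rw [Int.isCoprime_iff_gcd_eq_one, Int.gcd_comm]
      exact hcop
    have hdvd2 : (q : ℤ) ∣ (k1 : ℤ) - k2 := hcop'.dvd_of_dvd_mul_right hdvd
    have hnat : q ∣ ((k1 : ℤ) - k2).natAbs := by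
      rw [← Int.natAbs_natCast q]
      exact Int.natAbs_dvd_natAbs.mpr hdvd2
    rcases Nat.eq_zero_or_pos (((k1 : ℤ) - k2).natAbs) with h0 | h0
    · omega
    · have := Nat.le_of_dvd h0 hnat
      omega
  -- image of j is range q
  have himg : Finset.image j (Finset.range q) = Finset.range q := by
    apply Finset.eq_of_subset_of_card_le
    · intro i hi
      rw [Finset.mem_image] at hi
      obtain ⟨k, _, rfl⟩ := hi
      exact Finset.mem_range.mpr (hjlt k)
    · rw [Finset.card_image_of_injOn (fun k1 hk1 k2 hk2 => hinj k1 hk1 k2 hk2)]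
  -- integrability
  have hii : ∀ c d : ℝ, c ≤ d → d ≤ c + 1 → IntervalIntegrable f volume c d :=
    per_ii f hper hbv
  have hadj : ∀ i : ℕ, IntervalIntegrable f volume (a i) (a (i + 1)) := by
    intro i
    refine hii _ _ (hamono i) ?_
    rw [hstep]
    have : 1 / (q : ℝ) ≤ 1 := by
      rw [div_le_one hq0]; exact_mod_cast hq
    linarith
  -- endpoints
  have e0 : a 0 = y := by simp [ha]
  have eq1 : a q = y + 1 := by
    simp only [ha]
    rw [div_self hq0.ne']
  -- integral identities
  have hint1 : ∫ t in (0:ℝ)..1, f t = ∫ t in y..(y + 1), f t := by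
    have h := hper.intervalIntegral_add_eq 0 y
    simpa using h
  have hsplit : ∫ t in y..(y + 1), f t
      = ∑ i ∈ Finset.range q, ∫ t in (a i)..(a (i + 1)), f t := by
    have h := intervalIntegral.sum_integral_adjacent_intervals (a := a) (n := q)
      (fun k _ => hadj k)
    rw [h, e0, eq1]
  -- per-interval variation facts
  have hsubI : ∀ i : ℕ, i < q → Set.Icc (a i) (a (i + 1)) ⊆ Set.Icc y (y + 1) := by
    intro i hi
    apply Set.Icc_subset_Icc
    · simp only [ha]
      have h : (0 : ℝ) ≤ (i : ℝ) / q := by positivity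
      linarith
    · rw [hstep]
      simp only [ha]
      have h1 : ((i : ℝ) + 1) / q ≤ 1 := by
        rw [div_le_one hq0]
        exact_mod_cast hi
      have h2 : (i : ℝ) / q + 1 / q = ((i : ℝ) + 1) / q := by ring
      linarith
  have hVle : ∀ i : ℕ, i < q →
      eVariationOn f (Set.Icc (a i) (a (i + 1))) ≤ eVariationOn f (Set.Icc 0 1) := by
    intro i hi
    rw [← evar_window f hper y]
    exact eVariationOn.mono f (hsubI i hi)
  have hVfin : ∀ i ∈ Finset.range q, eVariationOn f (Set.Icc (a i) (a (i + 1))) ≠ ⊤ := by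
    intro i hi
    exact ne_top_of_le_ne_top hbv (hVle i (Finset.mem_range.mp hi))
  -- per-term bound
  have hterm : ∀ i : ℕ, i < q → ∀ w ∈ Set.Icc (a i) (a (i + 1)),
      |f w - (q : ℝ) * ∫ t in (a i)..(a (i + 1)), f t| ≤
        (eVariationOn f (Set.Icc (a i) (a (i + 1)))).toReal := by
    intro i hi w hw
    set c := a i with hc
    set d := a (i + 1) with hd
    have hcd : d = c + 1 / q := by rw [hc, hd]; exact hstep i
    have hcled : c ≤ d := by rw [hc, hd]; exact hamono i
    have hfint : IntervalIntegrable f volume c d := by rw [hc, hd]; exact hadj i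
    have hbv' : BoundedVariationOn f (Set.Icc c d) := by
      rw [hc, hd]
      exact ne_top_of_le_ne_top hbv (hVle i hi)
    clear_value c d
    set C := (eVariationOn f (Set.Icc c d)).toReal with hC
    have hCb : ∀ t ∈ Set.Icc c d, |f w - f t| ≤ C := by
      intro t ht
      have := hbv'.dist_le hw ht
      rwa [Real.dist_eq] at this
    have hqd : (q : ℝ) * (d - c) = 1 := by
      rw [hcd]
      field_simp
      ring
    have h1 : f w - (q : ℝ) * ∫ t in c..d, f t
        = (q : ℝ) * ∫ t in c..d, (f w - f t) := by
      rw [intervalIntegral.integral_sub intervalIntegrable_const hfint,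
        intervalIntegral.integral_const, smul_eq_mul]
      linear_combination (-(f w)) * hqd
    rw [h1]
    have h2 : |∫ t in c..d, (f w - f t)| ≤ ∫ t in c..d, |f w - f t| :=
      intervalIntegral.abs_integral_le_integral_abs hcled
    have h3 : ∫ t in c..d, |f w - f t| ≤ ∫ t in c..d, (C : ℝ) :=
      intervalIntegral.integral_mono_on hcled
        ((intervalIntegrable_const.sub hfint).abs) intervalIntegrable_const hCb
    have h4 : ∫ t in c..d, (C : ℝ) = (d - c) * C := by
      rw [intervalIntegral.integral_const, smul_eq_mul]
    calc |(q : ℝ) * ∫ t in c..d, (f w - f t)|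
        = (q : ℝ) * |∫ t in c..d, (f w - f t)| := by
          rw [abs_mul, abs_of_nonneg hq0.le]
      _ ≤ (q : ℝ) * ((d - c) * C) := by
          apply mul_le_mul_of_nonneg_left _ hq0.le
          calc |∫ t in c..d, (f w - f t)| ≤ ∫ t in c..d, |f w - f t| := h2
            _ ≤ ∫ t in c..d, (C : ℝ) := h3
            _ = (d - c) * C := h4
      _ = C := by rw [← mul_assoc, hqd, one_mul]
  -- variation sum bound
  have hvarsum : ∑ i ∈ Finset.range q, eVariationOn f (Set.Icc (a i) (a (i + 1)))
      ≤ eVariationOn f (Set.Icc 0 1) := by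
    have key : ∀ m : ℕ, ∑ i ∈ Finset.range m, eVariationOn f (Set.Icc (a i) (a (i + 1)))
        ≤ eVariationOn f (Set.Icc (a 0) (a m)) := by
      intro m
      induction m with
      | zero => simp
      | succ m ih =>
        rw [Finset.sum_range_succ]
        have ham : a 0 ≤ a m := by
          simp only [ha]
          have h : (0 : ℝ) ≤ (m : ℝ) / q := by positivity
          simp only [Nat.cast_zero, zero_div]
          linarith
        calc (∑ i ∈ Finset.range m, eVariationOn f (Set.Icc (a i) (a (i + 1))))
              + eVariationOn f (Set.Icc (a m) (a (m + 1)))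
            ≤ eVariationOn f (Set.Icc (a 0) (a m))
              + eVariationOn f (Set.Icc (a m) (a (m + 1))) := add_le_add ih le_rfl
          _ = eVariationOn f (Set.Icc (a 0) (a (m + 1))) :=
              evar_Icc_add f ham (hamono m)
    have h := key q
    rwa [e0, eq1, evar_window f hper y] at h
  -- assemble
  have hreindex : ∀ F : ℕ → ℝ, ∑ i ∈ Finset.range q, F i = ∑ k ∈ Finset.range q, F (j k) := by
    intro F
    conv_lhs => rw [← himg]
    exact Finset.sum_image hinj
  have hsum2 : (q : ℝ) * ∫ t in (0:ℝ)..1, f t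
      = ∑ k ∈ Finset.range q, (q : ℝ) * ∫ t in (a (j k))..(a (j k + 1)), f t := by
    rw [hint1, hsplit, Finset.mul_sum]
    exact hreindex _
  calc |∑ k ∈ Finset.range q, f (x + (k : ℝ) * α) - (q : ℝ) * ∫ t in (0:ℝ)..1, f t|
      = |∑ k ∈ Finset.range q,
          (f (z k) - (q : ℝ) * ∫ t in (a (j k))..(a (j k + 1)), f t)| := by
        rw [Finset.sum_sub_distrib, ← hsum2]
        congr 2
        exact Finset.sum_congr rfl fun k _ => hfz k
    _ ≤ ∑ k ∈ Finset.range q,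
          |f (z k) - (q : ℝ) * ∫ t in (a (j k))..(a (j k + 1)), f t| :=
        Finset.abs_sum_le_sum_abs _ _
    _ ≤ ∑ k ∈ Finset.range q,
          (eVariationOn f (Set.Icc (a (j k)) (a (j k + 1)))).toReal :=
        Finset.sum_le_sum fun k hk =>
          hterm (j k) (hjlt k) (z k) (hmem k (Finset.mem_range.mp hk))
    _ = ∑ i ∈ Finset.range q, (eVariationOn f (Set.Icc (a i) (a (i + 1)))).toReal :=
        (hreindex (fun i => (eVariationOn f (Set.Icc (a i) (a (i + 1)))).toReal)).symm
    _ = (∑ i ∈ Finset.range q, eVariationOn f (Set.Icc (a i) (a (i + 1)))).toReal :=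
        (ENNReal.toReal_sum hVfin).symm
    _ ≤ (eVariationOn f (Set.Icc 0 1)).toReal := ENNReal.toReal_mono hbv hvarsum
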